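/- Let $p \ge 2$, let $A$ be a nonnegative real $n \times n$ matrix, and let $x, y \in \mathbb{R}^n$ be nonnegative vectors. Define $z \in \mathbb{R}^n$ by $z_i = \left( \frac{x_i^p + y_i^p}{2} \right)^{1/p}$. Then $\sum_{i,j} a_{i,j} (x_i y_j + y_i x_j) \le 2 \sum_{i,j} a_{i,j} z_i z_j$; moreover, if $|x|_p = |y|_p = 1$ then $|z|_p = 1$. -/

import Mathlib

open Finset

/-- The `ℓ^p` norm of a vector in `ℝ^n`. -/
noncomputable def lpNorm {n : ℕ} (p : ℝ) (x : Fin n → ℝ) : ℝ :=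
  (∑ i, |x i| ^ p) ^ (1 / p)

/-- Two-point power mean (convexity) inequality. -/
lemma pm_aux {u v : ℝ} (hu : 0 ≤ u) (hv : 0 ≤ v) {q : ℝ} (hq : 1 ≤ q) :
    ((u + v) / 2) ^ q ≤ (u ^ q + v ^ q) / 2 := by
  have h := NNReal.rpow_arith_mean_le_arith_mean2_rpow (1/2) (1/2)
    (Real.toNNReal u) (Real.toNNReal v) (add_halves 1) hq
  have h' := (NNReal.coe_le_coe).2 h
  push_cast [NNReal.coe_rpow, Real.coe_toNNReal u hu, Real.coe_toNNReal v hv] at h'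
  have e : (u + v) / 2 = 1 / 2 * u + 1 / 2 * v := by ring
  rw [e]
  linarith

/-- Power mean `M_2 ≤ M_p` for `p ≥ 2`. -/
lemma pm2_le {a b : ℝ} (ha : 0 ≤ a) (hb : 0 ≤ b) {p : ℝ} (hp : 2 ≤ p) :
    Real.sqrt ((a ^ 2 + b ^ 2) / 2) ≤ ((a ^ p + b ^ p) / 2) ^ (1 / p) := by
  have hp0 : (0 : ℝ) < p := by linarith
  have hq : (1 : ℝ) ≤ p / 2 := by linarith
  have ha2 : (0 : ℝ) ≤ a ^ 2 := sq_nonneg a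
  have hb2 : (0 : ℝ) ≤ b ^ 2 := sq_nonneg b
  have key : ((a ^ 2 + b ^ 2) / 2) ^ (p / 2) ≤ (a ^ p + b ^ p) / 2 := by
    have h := pm_aux ha2 hb2 hq
    have e1 : (a ^ 2) ^ (p / 2) = a ^ p := by
      rw [← Real.rpow_two, ← Real.rpow_mul ha]
      congr 1; field_simp
    have e2 : (b ^ 2) ^ (p / 2) = b ^ p := by
      rw [← Real.rpow_two, ← Real.rpow_mul hb]
      congr 1; field_simp
    rwa [e1, e2] at h
  have hbase : (0 : ℝ) ≤ (a ^ 2 + b ^ 2) / 2 := by positivity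
  have h2 := Real.rpow_le_rpow (Real.rpow_nonneg hbase _) key (by positivity : (0:ℝ) ≤ 1 / p)
  rwa [← Real.rpow_mul hbase, show p / 2 * (1 / p) = 1 / 2 by field_simp,
    ← Real.sqrt_eq_rpow] at h2

/-- The key pointwise inequality. -/
lemma key_ineq {a b c d : ℝ} (ha : 0 ≤ a) (hb : 0 ≤ b) (hc : 0 ≤ c) (hd : 0 ≤ d)
    {p : ℝ} (hp : 2 ≤ p) :
    a * d + b * c ≤ 2 * ((a ^ p + b ^ p) / 2) ^ (1 / p) * ((c ^ p + d ^ p) / 2) ^ (1 / p) := by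
  have step1 : a * d + b * c ≤
      2 * Real.sqrt ((a ^ 2 + b ^ 2) / 2) * Real.sqrt ((c ^ 2 + d ^ 2) / 2) := by
    have h : 2 * Real.sqrt ((a ^ 2 + b ^ 2) / 2) * Real.sqrt ((c ^ 2 + d ^ 2) / 2)
        = Real.sqrt ((a ^ 2 + b ^ 2) * (c ^ 2 + d ^ 2)) := by
      rw [show (a ^ 2 + b ^ 2) * (c ^ 2 + d ^ 2)
            = 4 * (((a ^ 2 + b ^ 2) / 2) * ((c ^ 2 + d ^ 2) / 2)) by ring,
        Real.sqrt_mul (by norm_num), Real.sqrt_mul (by positivity),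
        show Real.sqrt 4 = 2 by
          rw [show (4:ℝ) = 2 ^ 2 by norm_num, Real.sqrt_sq (by norm_num)]]
      ring
    rw [h, Real.le_sqrt (by positivity) (by positivity)]
    nlinarith [sq_nonneg (a * c - b * d)]
  refine step1.trans ?_
  have h1 := pm2_le ha hb hp
  have h2 := pm2_le hc hd hp
  have s1 : (0:ℝ) ≤ Real.sqrt ((a ^ 2 + b ^ 2) / 2) := Real.sqrt_nonneg _
  have s2 : (0:ℝ) ≤ Real.sqrt ((c ^ 2 + d ^ 2) / 2) := Real.sqrt_nonneg _
  have r1 : (0:ℝ) ≤ ((a ^ p + b ^ p) / 2) ^ (1 / p) := Real.rpow_nonneg (by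
      have := Real.rpow_nonneg ha p; have := Real.rpow_nonneg hb p; linarith) _
  gcongr

/-- Let `p ≥ 2`, `A` a nonnegative `n × n` matrix, `x, y` nonnegative vectors, and
`z_i = ((x_iᵖ + y_iᵖ)/2)^{1/p}`. Then `∑ a_{ij} (x_i y_j + y_i x_j) ≤ 2 ∑ a_{ij} z_i z_j`;
moreover if `|x|_p = |y|_p = 1` then `|z|_p = 1`. -/
theorem symmetrization_ineq {n : ℕ} {p : ℝ} (hp : 2 ≤ p)
    (A : Matrix (Fin n) (Fin n) ℝ) (hA : ∀ i j, 0 ≤ A i j)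
    (x y : Fin n → ℝ) (hx : ∀ i, 0 ≤ x i) (hy : ∀ i, 0 ≤ y i)
    (z : Fin n → ℝ) (hz : ∀ i, z i = ((x i ^ p + y i ^ p) / 2) ^ (1 / p)) :
    (∑ i, ∑ j, A i j * (x i * y j + y i * x j) ≤ 2 * ∑ i, ∑ j, A i j * z i * z j) ∧
    (lpNorm p x = 1 → lpNorm p y = 1 → lpNorm p z = 1) := by
  have hp0 : (0 : ℝ) < p := by linarith
  constructor
  · rw [Finset.mul_sum]
    refine Finset.sum_le_sum fun i _ => ?_
    rw [Finset.mul_sum]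
    refine Finset.sum_le_sum fun j _ => ?_
    have key := key_ineq (hx i) (hy i) (hx j) (hy j) hp
    rw [hz i, hz j]
    calc A i j * (x i * y j + y i * x j)
        ≤ A i j * (2 * ((x i ^ p + y i ^ p) / 2) ^ (1 / p) *
            ((x j ^ p + y j ^ p) / 2) ^ (1 / p)) :=
          mul_le_mul_of_nonneg_left key (hA i j)
      _ = 2 * (A i j * ((x i ^ p + y i ^ p) / 2) ^ (1 / p) *
            ((x j ^ p + y j ^ p) / 2) ^ (1 / p)) := by ring
  · intro hxn hyn
    have hsum : ∀ (w : Fin n → ℝ), (∀ i, 0 ≤ w i) → lpNorm p w = 1 →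
        ∑ i, w i ^ p = 1 := by
      intro w hw hwn
      have habs : ∀ i, |w i| = w i := fun i => abs_of_nonneg (hw i)
      unfold lpNorm at hwn
      simp only [habs] at hwn
      have hS : (0:ℝ) ≤ ∑ i, w i ^ p :=
        Finset.sum_nonneg fun i _ => Real.rpow_nonneg (hw i) p
      have := congrArg (· ^ p) hwn
      rw [← Real.rpow_mul hS, one_div, inv_mul_cancel₀ (ne_of_gt hp0),
        Real.rpow_one, Real.one_rpow] at this
      exact this
    have hx1 := hsum x hx hxn
    have hy1 := hsum y hy hyn
    have hzp : ∀ i, |z i| ^ p = (x i ^ p + y i ^ p) / 2 := by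
      intro i
      have hb : (0:ℝ) ≤ (x i ^ p + y i ^ p) / 2 := by
        have := Real.rpow_nonneg (hx i) p; have := Real.rpow_nonneg (hy i) p; linarith
      rw [hz i, abs_of_nonneg (Real.rpow_nonneg hb _), ← Real.rpow_mul hb,
        one_div, inv_mul_cancel₀ (ne_of_gt hp0), Real.rpow_one]
    unfold lpNorm
    have : ∑ i, |z i| ^ p = 1 := by
      simp only [hzp]
      rw [show (∑ i, (x i ^ p + y i ^ p) / 2) =
        ((∑ i, x i ^ p) + ∑ i, y i ^ p) / 2 by rw [← Finset.sum_add_distrib, Finset.sum_div]]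
      rw [hx1, hy1]; norm_num
    rw [this, Real.one_rpow]
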